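/- Let A, A', B, B' be symmetric n×n matrices such that [[A', y], B] = [[B', y], A] and [[A, y], B'] = [[B, y], A'] for all symmetric matrices y. Then [B, A'] = [A, B']. -/

import Mathlib

open Matrix

/-- If symmetric `A, A', B, B'` satisfy `[[A', y], B] = [[B', y], A]` and
`[[A, y], B'] = [[B, y], A']` for all symmetric `y`, then `[B, A'] = [A, B']`. -/
theorem stmt_12 {n : ℕ}
    (A A' B B' : Matrix (Fin n) (Fin n) ℝ)
    (hA : Aᵀ = A) (hA' : A'ᵀ = A') (hB : Bᵀ = B) (hB' : B'ᵀ = B')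
    (h1 : ∀ y : Matrix (Fin n) (Fin n) ℝ, yᵀ = y → ⁅⁅A', y⁆, B⁆ = ⁅⁅B', y⁆, A⁆)
    (h2 : ∀ y : Matrix (Fin n) (Fin n) ℝ, yᵀ = y → ⁅⁅A, y⁆, B'⁆ = ⁅⁅B, y⁆, A'⁆) :
    ⁅B, A'⁆ = ⁅A, B'⁆ := by
  set D : Matrix (Fin n) (Fin n) ℝ := A' * B + A * B' - B' * A - B * A' with hD
  -- D commutes with all symmetric matrices
  have hcomm : ∀ y : Matrix (Fin n) (Fin n) ℝ, yᵀ = y → y * D = D * y := by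
    intro y hy
    have e1 := h1 y hy
    have e2 := h2 y hy
    have key : D * y - y * D =
        (⁅⁅A', y⁆, B⁆ - ⁅⁅B', y⁆, A⁆) + (⁅⁅A, y⁆, B'⁆ - ⁅⁅B, y⁆, A'⁆) := by
      simp only [hD, Ring.lie_def]
      noncomm_ring
    rw [e1, e2, sub_self, sub_self, add_zero] at key
    exact (sub_eq_zero.mp key).symm
  -- D is antisymmetric
  have hanti : Dᵀ = -D := by
    simp only [hD, transpose_sub, transpose_add, transpose_mul, hA, hA', hB, hB']
    noncomm_ring
  -- D is zero
  have hzero : D = 0 := by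
    ext i j
    by_cases hij : i = j
    · subst hij
      have h := congrFun (congrFun hanti i) i
      simp only [transpose_apply, Matrix.neg_apply] at h
      have : D i i = 0 := by linarith
      simpa using this
    · have hc := hcomm (single i i 1)
        (by ext a b; simp [single, and_comm])
      have h := congrFun (congrFun hc.symm i) j
      rw [single_mul_apply_same,
        mul_single_apply_of_ne (hbj := Ne.symm hij)] at h
      simp only [one_mul] at h
      simpa using h.symm
  have key : ⁅B, A'⁆ - ⁅A, B'⁆ = -D := by
    simp only [hD, Ring.lie_def]
    noncomm_ring
  rw [hzero, neg_zero] at key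
  exact sub_eq_zero.mp key
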